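/- Let p be a prime number and n a positive integer. In the ring of polynomials over ℤ in n variables x_1, …, x_n, there exists an element g belonging to the subring generated by the elementary symmetric polynomials e_1, …, e_n in x_1, …, x_n such that x_1^p + x_2^p + ⋯ + x_n^p = (x_1 + x_2 + ⋯ + x_n)^p + p·g. -/

import Mathlib

open MvPolynomial

/-- For a prime `p`, the power sum `x₁^p + ⋯ + xₙ^p` differs from
`(x₁ + ⋯ + xₙ)^p` by `p` times an element of the subring generated by the
elementary symmetric polynomials `e₁, …, eₙ`. -/
theorem powerSum_prime_eq_sum_pow_add_prime_mul
    (p : ℕ) (hp : p.Prime) (n : ℕ) (hn : 0 < n) :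
    ∃ g ∈ Subring.closure (MvPolynomial.esymm (Fin n) ℤ '' Set.Icc 1 n),
      (∑ i : Fin n, (X i : MvPolynomial (Fin n) ℤ) ^ p)
        = (∑ i : Fin n, (X i : MvPolynomial (Fin n) ℤ)) ^ p + p * g := by
  haveI : Fact p.Prime := ⟨hp⟩
  set F : MvPolynomial (Fin n) ℤ :=
    (∑ i : Fin n, (X i : MvPolynomial (Fin n) ℤ) ^ p)
      - (∑ i : Fin n, (X i : MvPolynomial (Fin n) ℤ)) ^ p with hF
  have hdvd : (C (p : ℤ) : MvPolynomial (Fin n) ℤ) ∣ F := by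
    rw [C_dvd_iff_map_hom_eq_zero (Int.castRingHom (ZMod p)) (p : ℤ)
      (fun r => ZMod.intCast_zmod_eq_zero_iff_dvd r p)]
    simp only [hF, map_sub, map_sum, map_pow, map_X]
    rw [sum_pow_char, sub_self]
  obtain ⟨g, hg⟩ := hdvd
  have hsymm : g.IsSymmetric := by
    intro e
    have hFs : rename (e : Fin n → Fin n) F = F := by
      simp only [hF, map_sub, map_sum, map_pow, rename_X]
      rw [Fintype.sum_equiv e (fun i => X (e i) ^ p) (fun i => X i ^ p) (fun i => rfl),
        Fintype.sum_equiv e (fun i => (X (e i) : MvPolynomial (Fin n) ℤ)) (fun i => X i)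
          (fun i => rfl)]
    have : (C (p : ℤ) : MvPolynomial (Fin n) ℤ) * rename (e : Fin n → Fin n) g
        = C (p : ℤ) * g := by
      rw [← rename_C (R := ℤ) (e : Fin n → Fin n) (p : ℤ), ← map_mul, ← hg, hFs, hg,
        rename_C]
    exact mul_left_cancel₀ (by
      simpa using (Int.natCast_ne_zero.mpr hp.ne_zero)) this
  -- g is symmetric, hence in the range of esymmAlgHom
  obtain ⟨q, hq⟩ := esymmAlgHom_surjective (σ := Fin n) (R := ℤ)
    (le_of_eq (Fintype.card_fin n)) ⟨g, hsymm⟩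
  have hq' : aeval (fun i : Fin n => esymm (Fin n) ℤ (i + 1)) q = g := by
    have := congrArg Subtype.val hq
    rwa [esymmAlgHom_apply] at this
  have hmem : g ∈ Algebra.adjoin ℤ
      (Set.range fun i : Fin n => esymm (Fin n) ℤ (i + 1)) := by
    rw [Algebra.adjoin_range_eq_range_aeval]
    exact ⟨q, hq'⟩
  have hrange : (Set.range fun i : Fin n => esymm (Fin n) ℤ (i + 1))
      = MvPolynomial.esymm (Fin n) ℤ '' Set.Icc 1 n := by
    ext x
    constructor
    · rintro ⟨i, rfl⟩
      exact ⟨i + 1, ⟨Nat.succ_le_succ (Nat.zero_le _), Nat.succ_le_of_lt i.2⟩, rfl⟩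
    · rintro ⟨k, ⟨hk1, hk2⟩, rfl⟩
      exact ⟨⟨k - 1, by omega⟩, by simp; congr 1; omega⟩
  rw [hrange] at hmem
  erw [Algebra.adjoin_int] at hmem
  refine ⟨g, hmem, ?_⟩
  have : (p : MvPolynomial (Fin n) ℤ) = C (p : ℤ) := by simp
  rw [this, ← hg, hF]
  ring
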